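/- Let μ and ν be positive Borel measures on (0,∞) with ∫_{(0,∞)} min(1,x) μ(dx) < ∞ and ∫_{(0,∞)} min(1,x) ν(dx) < ∞. If ∫_{(0,∞)} G⁰₁ h(x) μ(dx) = ∫_{(0,∞)} G⁰₁ h(x) ν(dx) for every nonnegative h ∈ C₀([0,∞)) (these integrals are finite), then μ = ν. -/

import Mathlib

open MeasureTheory Real Filter Topology

/-- The resolvent density of killed Brownian motion on `(0,∞)`. -/
noncomputable def g0 (α x y : ℝ) : ℝ :=
  (2 / Real.sqrt (2 * α)) * Real.sinh (Real.sqrt (2 * α) * min x y) *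
    Real.exp (-(Real.sqrt (2 * α) * max x y))

/-- The resolvent `G⁰_α h` of killed Brownian motion on `(0,∞)`. -/
noncomputable def G0 (α : ℝ) (h : ℝ → ℝ) (x : ℝ) : ℝ :=
  ∫ y in Set.Ioi (0 : ℝ), g0 α x y * h y

/-- `h ∈ C₀([0,∞))`: continuous on `[0,∞)` and vanishing at infinity. -/
def MemC0 (h : ℝ → ℝ) : Prop :=
  ContinuousOn h (Set.Ici 0) ∧ Filter.Tendsto h Filter.atTop (nhds 0)

lemma sqrt2_pos : (0:ℝ) < Real.sqrt 2 := Real.sqrt_pos.mpr (by norm_num)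
lemma sqrt2_sq : Real.sqrt 2 * Real.sqrt 2 = 2 := Real.mul_self_sqrt (by norm_num)

lemma g0_one (x y : ℝ) : g0 1 x y
    = Real.sqrt 2 * Real.sinh (Real.sqrt 2 * min x y) * Real.exp (-(Real.sqrt 2 * max x y)) := by
  have h2 : (2:ℝ) / Real.sqrt (2 * 1) = Real.sqrt 2 := by
    rw [mul_one, div_eq_iff (ne_of_gt sqrt2_pos), sqrt2_sq]
  rw [g0, h2, mul_one]

lemma hasDerivAt_P (f : ℝ → ℝ) (hd1 : Differentiable ℝ f) (hd2 : Differentiable ℝ (deriv f))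
    (y : ℝ) :
    HasDerivAt (fun y => -(1/2) * (Real.sinh (Real.sqrt 2*y) * deriv f y
        - Real.sqrt 2 * Real.cosh (Real.sqrt 2*y) * f y))
      (Real.sinh (Real.sqrt 2*y) * (f y - (1/2) * deriv (deriv f) y)) y := by
  have h1 : HasDerivAt f (deriv f y) y := (hd1 y).hasDerivAt
  have h2 : HasDerivAt (deriv f) (deriv (deriv f) y) y := (hd2 y).hasDerivAt
  have hlin : HasDerivAt (fun y : ℝ => Real.sqrt 2 * y) (Real.sqrt 2) y := by
    simpa using (hasDerivAt_id y).const_mul (Real.sqrt 2)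
  have hs : HasDerivAt (fun y => Real.sinh (Real.sqrt 2*y))
      (Real.cosh (Real.sqrt 2*y) * Real.sqrt 2) y := (Real.hasDerivAt_sinh _).comp y hlin
  have hc : HasDerivAt (fun y => Real.cosh (Real.sqrt 2*y))
      (Real.sinh (Real.sqrt 2*y) * Real.sqrt 2) y := (Real.hasDerivAt_cosh _).comp y hlin
  have H := (((hs.mul h2).sub ((hc.const_mul (Real.sqrt 2)).mul h1)).const_mul (-(1/2:ℝ)))
  refine H.congr_deriv (Eq.symm ?_)
  linear_combination (-(1/2) * Real.sinh (Real.sqrt 2*y) * f y) * sqrt2_sq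

lemma hasDerivAt_Q (f : ℝ → ℝ) (hd1 : Differentiable ℝ f) (hd2 : Differentiable ℝ (deriv f))
    (y : ℝ) :
    HasDerivAt (fun y => -(1/2) * (Real.exp (-(Real.sqrt 2*y)) * (deriv f y + Real.sqrt 2 * f y)))
      (Real.exp (-(Real.sqrt 2*y)) * (f y - (1/2) * deriv (deriv f) y)) y := by
  have h1 : HasDerivAt f (deriv f y) y := (hd1 y).hasDerivAt
  have h2 : HasDerivAt (deriv f) (deriv (deriv f) y) y := (hd2 y).hasDerivAt
  have hlin : HasDerivAt (fun y : ℝ => -(Real.sqrt 2 * y)) (-Real.sqrt 2) y := by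
    simpa using ((hasDerivAt_id y).const_mul (-Real.sqrt 2))
  have he : HasDerivAt (fun y => Real.exp (-(Real.sqrt 2*y)))
      (Real.exp (-(Real.sqrt 2*y)) * (-Real.sqrt 2)) y := (Real.hasDerivAt_exp _).comp y hlin
  have H := ((he.mul (h2.add (h1.const_mul (Real.sqrt 2)))).const_mul (-(1/2:ℝ)))
  refine H.congr_deriv (Eq.symm ?_)
  simp only [Pi.add_apply]
  linear_combination (-(1/2) * Real.exp (-(Real.sqrt 2*y)) * f y) * sqrt2_sq

lemma continuous_g0_one : Continuous (fun p : ℝ × ℝ => g0 1 p.1 p.2) := by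
  have hmin : Continuous fun p : ℝ×ℝ => min p.1 p.2 := continuous_fst.min continuous_snd
  have hmax : Continuous fun p : ℝ×ℝ => max p.1 p.2 := continuous_fst.max continuous_snd
  have h1 : Continuous fun p : ℝ×ℝ => Real.sinh (Real.sqrt (2*1) * min p.1 p.2) :=
    Real.continuous_sinh.comp (continuous_const.mul hmin)
  have h2 : Continuous fun p : ℝ×ℝ => Real.exp (-(Real.sqrt (2*1) * max p.1 p.2)) :=
    Real.continuous_exp.comp ((continuous_const.mul hmax).neg)
  have h3 : Continuous fun p : ℝ×ℝ => (2 / Real.sqrt (2*1)) *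
      Real.sinh (Real.sqrt (2*1) * min p.1 p.2) *
      Real.exp (-(Real.sqrt (2*1) * max p.1 p.2)) := (continuous_const.mul h1).mul h2
  exact h3

lemma continuous_g0_one_right (x : ℝ) : Continuous (fun y => g0 1 x y) := by
  have h1 : Continuous fun y : ℝ => Real.sinh (Real.sqrt (2*1) * min x y) :=
    Real.continuous_sinh.comp (continuous_const.mul (continuous_const.min continuous_id))
  have h2 : Continuous fun y : ℝ => Real.exp (-(Real.sqrt (2*1) * max x y)) :=
    Real.continuous_exp.comp ((continuous_const.mul (continuous_const.max continuous_id)).neg)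
  have h3 : Continuous fun y : ℝ => (2 / Real.sqrt (2*1)) *
      Real.sinh (Real.sqrt (2*1) * min x y) *
      Real.exp (-(Real.sqrt (2*1) * max x y)) := (continuous_const.mul h1).mul h2
  exact h3

lemma g0_nonneg {x y : ℝ} (hx : 0 ≤ x) (hy : 0 ≤ y) : 0 ≤ g0 1 x y := by
  rw [g0_one]
  have h2 : (0:ℝ) ≤ Real.sinh (Real.sqrt 2 * min x y) :=
    Real.sinh_nonneg_iff.mpr (by positivity)
  positivity

/-- Key kernel identity: `G0 1 (f - f''/2) = f` for `f` with compact support in `(0,∞)`. -/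
lemma G0_resolvent (f : ℝ → ℝ) (hd1 : Differentiable ℝ f) (hd2 : Differentiable ℝ (deriv f))
    (hc2 : Continuous (deriv (deriv f))) {a b : ℝ} (ha : 0 < a)
    (hsupp : ∀ y, y ∉ Set.Icc a b → f y = 0) {x : ℝ} (hx : 0 < x) :
    G0 1 (fun y => f y - (1/2) * deriv (deriv f) y) x = f x := by
  have hopen : IsOpen (Set.Icc a b)ᶜ := isClosed_Icc.isOpen_compl
  have hdf0 : ∀ y, y ∉ Set.Icc a b → deriv f y = 0 := by
    intro y hy
    have hev : f =ᶠ[nhds y] (fun _ => (0:ℝ)) :=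
      Filter.eventuallyEq_of_mem (hopen.mem_nhds hy) (fun z hz => hsupp z hz)
    rw [hev.deriv_eq, deriv_const]
  have hddf0 : ∀ y, y ∉ Set.Icc a b → deriv (deriv f) y = 0 := by
    intro y hy
    have hev : deriv f =ᶠ[nhds y] (fun _ => (0:ℝ)) :=
      Filter.eventuallyEq_of_mem (hopen.mem_nhds hy) (fun z hz => hdf0 z hz)
    rw [hev.deriv_eq, deriv_const]
  set h : ℝ → ℝ := fun y => f y - (1/2) * deriv (deriv f) y with hh
  have hh0 : ∀ y, y ∉ Set.Icc a b → h y = 0 := by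
    intro y hy; simp only [hh, hsupp y hy, hddf0 y hy]; ring
  have hhcont : Continuous h := hd1.continuous.sub (continuous_const.mul hc2)
  have hFcont : Continuous (fun y => g0 1 x y * h y) := (continuous_g0_one_right x).mul hhcont
  have hFsupp : HasCompactSupport (fun y => g0 1 x y * h y) :=
    HasCompactSupport.intro isCompact_Icc (fun y hy => by rw [hh0 y hy, mul_zero])
  have hFint : Integrable (fun y => g0 1 x y * h y) :=
    hFcont.integrable_of_hasCompactSupport hFsupp
  set R : ℝ := max x b + 1 with hR
  have hxR : x ≤ R := le_trans (le_max_left _ _) (by linarith)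
  have hbR : b < R := lt_of_le_of_lt (le_max_right x b) (by linarith)
  have e1 : (∫ y in Set.Ioi (0:ℝ), g0 1 x y * h y)
      = (∫ y in Set.Ioc 0 x, g0 1 x y * h y) + (∫ y in Set.Ioi x, g0 1 x y * h y) := by
    rw [← Set.Ioc_union_Ioi_eq_Ioi hx.le]
    exact setIntegral_union (Set.Ioc_disjoint_Ioi le_rfl) measurableSet_Ioi
      hFint.integrableOn hFint.integrableOn
  have e2 : (∫ y in Set.Ioi x, g0 1 x y * h y) = (∫ y in Set.Ioc x R, g0 1 x y * h y) := by
    rw [← Set.Ioc_union_Ioi_eq_Ioi hxR, setIntegral_union (Set.Ioc_disjoint_Ioi le_rfl)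
      measurableSet_Ioi hFint.integrableOn hFint.integrableOn]
    have hz : (∫ y in Set.Ioi R, g0 1 x y * h y) = 0 := by
      rw [setIntegral_congr_fun measurableSet_Ioi (g := fun _ => (0:ℝ))]
      · simp
      · intro y hy
        have hyb : y ∉ Set.Icc a b := by
          simp only [Set.mem_Icc, not_and_or, not_le]
          right; linarith [Set.mem_Ioi.mp hy]
        show g0 1 x y * h y = 0
        rw [hh0 y hyb, mul_zero]
    rw [hz, add_zero]
  -- first piece
  have p1 : (∫ y in Set.Ioc 0 x, g0 1 x y * h y)
      = Real.sqrt 2 * Real.exp (-(Real.sqrt 2*x)) *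
        (-(1/2) * (Real.sinh (Real.sqrt 2*x) * deriv f x
          - Real.sqrt 2 * Real.cosh (Real.sqrt 2*x) * f x)) := by
    rw [setIntegral_congr_fun measurableSet_Ioc
      (g := fun y => (Real.sqrt 2 * Real.exp (-(Real.sqrt 2*x))) * (Real.sinh (Real.sqrt 2*y) * h y))]
    · rw [MeasureTheory.integral_const_mul, ← intervalIntegral.integral_of_le hx.le,
        intervalIntegral.integral_eq_sub_of_hasDerivAt
          (f := fun y => -(1/2) * (Real.sinh (Real.sqrt 2*y) * deriv f y
            - Real.sqrt 2 * Real.cosh (Real.sqrt 2*y) * f y))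
          (fun y _ => hasDerivAt_P f hd1 hd2 y)
          (((Real.continuous_sinh.comp (continuous_const.mul continuous_id)).mul
            hhcont).intervalIntegrable 0 x)]
      have hf00 : f 0 = 0 := hsupp 0 (by simp [Set.mem_Icc]; intro h'; linarith)
      simp [hf00]
    · intro y hy
      show g0 1 x y * h y = Real.sqrt 2 * Real.exp (-(Real.sqrt 2*x)) * (Real.sinh (Real.sqrt 2*y) * h y)
      rw [g0_one, min_eq_right hy.2, max_eq_left hy.2]
      ring
  -- second piece
  have p2 : (∫ y in Set.Ioc x R, g0 1 x y * h y)
      = Real.sqrt 2 * Real.sinh (Real.sqrt 2*x) *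
        ((1/2) * (Real.exp (-(Real.sqrt 2*x)) * (deriv f x + Real.sqrt 2 * f x))) := by
    rw [setIntegral_congr_fun measurableSet_Ioc
      (g := fun y => (Real.sqrt 2 * Real.sinh (Real.sqrt 2*x)) * (Real.exp (-(Real.sqrt 2*y)) * h y))]
    · rw [MeasureTheory.integral_const_mul, ← intervalIntegral.integral_of_le hxR,
        intervalIntegral.integral_eq_sub_of_hasDerivAt
          (f := fun y => -(1/2) * (Real.exp (-(Real.sqrt 2*y)) * (deriv f y + Real.sqrt 2 * f y)))
          (fun y _ => hasDerivAt_Q f hd1 hd2 y)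
          ((((Real.continuous_exp.comp ((continuous_const.mul continuous_id).neg))).mul
            hhcont).intervalIntegrable x R)]
      have hRb : R ∉ Set.Icc a b := by
        simp only [Set.mem_Icc, not_and_or, not_le]; right; linarith
      rw [hsupp R hRb, hdf0 R hRb]
      ring
    · intro y hy
      show g0 1 x y * h y = Real.sqrt 2 * Real.sinh (Real.sqrt 2*x) * (Real.exp (-(Real.sqrt 2*y)) * h y)
      rw [g0_one, min_eq_left hy.1.le, max_eq_right hy.1.le]
      ring
  -- combine
  have key : Real.exp (-(Real.sqrt 2*x)) * (Real.cosh (Real.sqrt 2*x) + Real.sinh (Real.sqrt 2*x)) = 1 := by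
    rw [Real.cosh_add_sinh, ← Real.exp_add]; norm_num
  show (∫ y in Set.Ioi (0:ℝ), g0 1 x y * h y) = f x
  rw [e1, e2, p1, p2]
  linear_combination ((1/2) * Real.exp (-(Real.sqrt 2*x)) * (Real.cosh (Real.sqrt 2*x)
    + Real.sinh (Real.sqrt 2*x)) * f x) * sqrt2_sq + f x * key

lemma sinh_le_mul_exp {t : ℝ} (ht : 0 ≤ t) : Real.sinh t ≤ t * Real.exp t := by
  have e1 : Real.exp (-t) = Real.exp t * Real.exp (-(2*t)) := by
    rw [← Real.exp_add]; ring_nf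
  have e2 : 1 - 2*t ≤ Real.exp (-(2*t)) := by
    have := Real.add_one_le_exp (-(2*t)); linarith
  rw [Real.sinh_eq]
  nlinarith [Real.exp_pos t]

lemma sinh_le_half_exp (t : ℝ) : Real.sinh t ≤ Real.exp t / 2 := by
  rw [Real.sinh_eq]
  nlinarith [Real.exp_pos (-t)]

lemma g0_le {x y : ℝ} (hx : 0 < x) (hy : 0 < y) :
    g0 1 x y ≤ 2 * Real.exp (Real.sqrt 2) * min 1 x := by
  rw [g0_one]
  have hs : (0:ℝ) < Real.sqrt 2 := sqrt2_pos
  have hm : 0 ≤ min x y := le_min hx.le hy.le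
  have hmM : min x y ≤ max x y := min_le_max
  have hsh0 : 0 ≤ Real.sinh (Real.sqrt 2 * min x y) := Real.sinh_nonneg_iff.mpr (by positivity)
  have hexp1 : Real.exp (-(Real.sqrt 2 * max x y)) ≤ 1 := by
    rw [Real.exp_le_one_iff]
    nlinarith
  have hexp0 : 0 < Real.exp (-(Real.sqrt 2 * max x y)) := Real.exp_pos _
  rcases le_total x 1 with hx1 | hx1
  · rw [min_eq_right hx1]
    have h1 : Real.sinh (Real.sqrt 2 * min x y) ≤ Real.sinh (Real.sqrt 2 * x) :=
      Real.sinh_le_sinh.mpr (by nlinarith [min_le_left x y])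
    have h2 : Real.sinh (Real.sqrt 2 * x) ≤ (Real.sqrt 2 * x) * Real.exp (Real.sqrt 2 * x) :=
      sinh_le_mul_exp (by positivity)
    have h3 : Real.exp (Real.sqrt 2 * x) ≤ Real.exp (Real.sqrt 2) :=
      Real.exp_le_exp.mpr (by nlinarith)
    have h4 : (0:ℝ) < Real.exp (Real.sqrt 2) := Real.exp_pos _
    have h5 : 0 ≤ Real.sinh (Real.sqrt 2 * x) := Real.sinh_nonneg_iff.mpr (by positivity)
    have c1 := mul_le_mul_of_nonneg_right (mul_le_mul_of_nonneg_left h1 hs.le) hexp0.le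
    have c2 := mul_le_mul_of_nonneg_left hexp1 (mul_nonneg hs.le h5)
    have c3 := mul_le_mul_of_nonneg_left h2 hs.le
    have c3' : Real.sqrt 2 * (Real.sqrt 2 * x * Real.exp (Real.sqrt 2*x))
        = 2 * x * Real.exp (Real.sqrt 2*x) := by
      linear_combination (x * Real.exp (Real.sqrt 2*x)) * sqrt2_sq
    have c4 := mul_le_mul_of_nonneg_left h3 (by positivity : (0:ℝ) ≤ 2*x)
    nlinarith [c1, c2, c3, c3', c4]
  · rw [min_eq_left hx1]
    have h3 : Real.sinh (Real.sqrt 2 * min x y) ≤ Real.exp (Real.sqrt 2 * min x y) / 2 :=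
      sinh_le_half_exp _
    have h4 : Real.exp (Real.sqrt 2 * min x y) * Real.exp (-(Real.sqrt 2 * max x y)) ≤ 1 := by
      rw [← Real.exp_add, Real.exp_le_one_iff]
      nlinarith
    have h5 : (0:ℝ) < Real.exp (Real.sqrt 2 * min x y) := Real.exp_pos _
    have h6 : (1:ℝ) ≤ Real.exp (Real.sqrt 2) := Real.one_le_exp hs.le
    have c1 := mul_le_mul_of_nonneg_right (mul_le_mul_of_nonneg_left h3 hs.le) hexp0.le
    have c2 := mul_le_mul_of_nonneg_left h4 (by positivity : (0:ℝ) ≤ Real.sqrt 2 / 2)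
    have c3 : Real.sqrt 2 ≤ 2 := by nlinarith [sqrt2_sq, hs]
    nlinarith [c1, c2, c3]

lemma abs_G0_le (h : ℝ → ℝ) (hcont : Continuous h) (hcs : HasCompactSupport h)
    {x : ℝ} (hx : 0 < x) :
    |G0 1 h x| ≤ (2 * Real.exp (Real.sqrt 2) * (∫ y in Set.Ioi (0:ℝ), |h y|)) * min 1 x := by
  have hFc : Continuous (fun y => g0 1 x y * h y) := (continuous_g0_one_right x).mul hcont
  have hFcs : HasCompactSupport (fun y => g0 1 x y * h y) := hcs.mul_left
  have hFint : Integrable (fun y => g0 1 x y * h y) := hFc.integrable_of_hasCompactSupport hFcs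
  have habs : Integrable (fun y => |h y|) := (hcont.abs.integrable_of_hasCompactSupport hcs.abs)
  have step1 : |G0 1 h x| ≤ ∫ y in Set.Ioi (0:ℝ), |g0 1 x y * h y| := by
    have := MeasureTheory.norm_integral_le_integral_norm (f := fun y => g0 1 x y * h y)
      (μ := volume.restrict (Set.Ioi 0))
    simp only [Real.norm_eq_abs, abs_mul] at this
    calc |G0 1 h x| = |∫ (a : ℝ) in Set.Ioi 0, g0 1 x a * h a| := rfl
      _ ≤ ∫ (a : ℝ) in Set.Ioi 0, |g0 1 x a| * |h a| := this
      _ = ∫ y in Set.Ioi (0:ℝ), |g0 1 x y * h y| := by simp only [abs_mul]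
  have step2 : (∫ y in Set.Ioi (0:ℝ), |g0 1 x y * h y|)
      ≤ ∫ y in Set.Ioi (0:ℝ), (2 * Real.exp (Real.sqrt 2) * min 1 x) * |h y| := by
    apply setIntegral_mono_on
    · exact hFint.abs.integrableOn
    · exact (habs.const_mul _).integrableOn
    · exact measurableSet_Ioi
    · intro y hy
      rw [abs_mul, abs_of_nonneg (g0_nonneg hx.le (le_of_lt (Set.mem_Ioi.mp hy)))]
      exact mul_le_mul_of_nonneg_right (g0_le hx (Set.mem_Ioi.mp hy)) (abs_nonneg _)
  calc |G0 1 h x| ≤ ∫ y in Set.Ioi (0:ℝ), (2 * Real.exp (Real.sqrt 2) * min 1 x) * |h y| :=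
        le_trans step1 step2
    _ = (2 * Real.exp (Real.sqrt 2) * (∫ y in Set.Ioi (0:ℝ), |h y|)) * min 1 x := by
        rw [MeasureTheory.integral_const_mul]; ring

lemma stronglyMeasurable_G0 (h : ℝ → ℝ) (hcont : Continuous h) :
    StronglyMeasurable (G0 1 h) := by
  have hF : StronglyMeasurable (fun p : ℝ×ℝ => g0 1 p.1 p.2 * h p.2) :=
    (continuous_g0_one.mul (hcont.comp continuous_snd)).stronglyMeasurable
  have := hF.integral_prod_right' (ν := volume.restrict (Set.Ioi 0))
  exact this

lemma integrable_min_one {μ : Measure ℝ}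
    (hμ : (∫⁻ x in Set.Ioi (0 : ℝ), ENNReal.ofReal (min 1 x) ∂μ) < ⊤) :
    Integrable (fun x => min 1 x) (μ.restrict (Set.Ioi 0)) := by
  constructor
  · exact (continuous_const.min continuous_id).aestronglyMeasurable
  · rw [hasFiniteIntegral_iff_norm]
    have : (∫⁻ x in Set.Ioi (0:ℝ), ENNReal.ofReal ‖min 1 x‖ ∂μ)
        = ∫⁻ x in Set.Ioi (0:ℝ), ENNReal.ofReal (min 1 x) ∂μ := by
      apply setLIntegral_congr_fun measurableSet_Ioi
      intro x hx
      dsimp only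
      rw [Real.norm_eq_abs, abs_of_nonneg (le_min zero_le_one (le_of_lt hx))]
    rw [this]; exact hμ

lemma integrable_G0 {μ : Measure ℝ}
    (hμ : (∫⁻ x in Set.Ioi (0 : ℝ), ENNReal.ofReal (min 1 x) ∂μ) < ⊤)
    (h : ℝ → ℝ) (hcont : Continuous h) (hcs : HasCompactSupport h) :
    Integrable (G0 1 h) (μ.restrict (Set.Ioi 0)) := by
  apply Integrable.mono' (((integrable_min_one hμ).const_mul
    (2 * Real.exp (Real.sqrt 2) * (∫ y in Set.Ioi (0:ℝ), |h y|))))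
    (stronglyMeasurable_G0 h hcont).aestronglyMeasurable
  rw [ae_restrict_iff' measurableSet_Ioi]
  filter_upwards with x
  intro hx'
  rw [Real.norm_eq_abs]
  exact abs_G0_le h hcont hcs hx'

lemma integral_f_eq (μ ν : Measure ℝ)
    (hμ : (∫⁻ x in Set.Ioi (0 : ℝ), ENNReal.ofReal (min 1 x) ∂μ) < ⊤)
    (hν : (∫⁻ x in Set.Ioi (0 : ℝ), ENNReal.ofReal (min 1 x) ∂ν) < ⊤)
    (heq : ∀ h : ℝ → ℝ, MemC0 h → (∀ x, 0 ≤ h x) →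
      ∫ x in Set.Ioi (0 : ℝ), G0 1 h x ∂μ = ∫ x in Set.Ioi (0 : ℝ), G0 1 h x ∂ν)
    (f : ℝ → ℝ) (hd1 : Differentiable ℝ f) (hd2 : Differentiable ℝ (deriv f))
    (hc2 : Continuous (deriv (deriv f))) {a b : ℝ} (ha : 0 < a)
    (hsupp : ∀ y, y ∉ Set.Icc a b → f y = 0) :
    ∫ x in Set.Ioi (0:ℝ), f x ∂μ = ∫ x in Set.Ioi (0:ℝ), f x ∂ν := by
  have hopen : IsOpen (Set.Icc a b)ᶜ := isClosed_Icc.isOpen_compl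
  have hdf0 : ∀ y, y ∉ Set.Icc a b → deriv f y = 0 := by
    intro y hy
    have hev : f =ᶠ[nhds y] (fun _ => (0:ℝ)) :=
      Filter.eventuallyEq_of_mem (hopen.mem_nhds hy) (fun z hz => hsupp z hz)
    rw [hev.deriv_eq, deriv_const]
  have hddf0 : ∀ y, y ∉ Set.Icc a b → deriv (deriv f) y = 0 := by
    intro y hy
    have hev : deriv f =ᶠ[nhds y] (fun _ => (0:ℝ)) :=
      Filter.eventuallyEq_of_mem (hopen.mem_nhds hy) (fun z hz => hdf0 z hz)
    rw [hev.deriv_eq, deriv_const]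
  set h : ℝ → ℝ := fun y => f y - (1/2) * deriv (deriv f) y with hhdef
  have hh0 : ∀ y, y ∉ Set.Icc a b → h y = 0 := by
    intro y hy; simp only [hhdef, hsupp y hy, hddf0 y hy]; ring
  have hhcont : Continuous h := hd1.continuous.sub (continuous_const.mul hc2)
  set hp : ℝ → ℝ := fun y => max (h y) 0 with hpdef
  set hm : ℝ → ℝ := fun y => max (-h y) 0 with hmdef
  have hpm : ∀ y, hp y - hm y = h y := fun y => max_zero_sub_max_neg_zero_eq_self (h y)
  have hpcont : Continuous hp := hhcont.max continuous_const
  have hmcont : Continuous hm := hhcont.neg.max continuous_const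
  have hp0 : ∀ y, y ∉ Set.Icc a b → hp y = 0 := by
    intro y hy; simp [hpdef, hh0 y hy]
  have hm0 : ∀ y, y ∉ Set.Icc a b → hm y = 0 := by
    intro y hy; simp [hmdef, hh0 y hy]
  have hpcs : HasCompactSupport hp := HasCompactSupport.intro isCompact_Icc hp0
  have hmcs : HasCompactSupport hm := HasCompactSupport.intro isCompact_Icc hm0
  have hptend : Filter.Tendsto hp Filter.atTop (nhds 0) := by
    apply Filter.Tendsto.congr' _ (tendsto_const_nhds (x := (0:ℝ)) (f := Filter.atTop))
    filter_upwards [Filter.eventually_ge_atTop (b+1)] with y hy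
    exact (hp0 y (by simp only [Set.mem_Icc, not_and_or, not_le]; right; linarith)).symm
  have hmtend : Filter.Tendsto hm Filter.atTop (nhds 0) := by
    apply Filter.Tendsto.congr' _ (tendsto_const_nhds (x := (0:ℝ)) (f := Filter.atTop))
    filter_upwards [Filter.eventually_ge_atTop (b+1)] with y hy
    exact (hm0 y (by simp only [Set.mem_Icc, not_and_or, not_le]; right; linarith)).symm
  have h1 := heq hp ⟨hpcont.continuousOn, hptend⟩ (fun x => le_max_right _ _)
  have h2 := heq hm ⟨hmcont.continuousOn, hmtend⟩ (fun x => le_max_right _ _)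
  have hpt : ∀ x ∈ Set.Ioi (0:ℝ), f x = G0 1 hp x - G0 1 hm x := by
    intro x hx
    have hres := G0_resolvent f hd1 hd2 hc2 ha hsupp (Set.mem_Ioi.mp hx)
    have hip : Integrable (fun y => g0 1 x y * hp y) (volume.restrict (Set.Ioi 0)) :=
      (((continuous_g0_one_right x).mul hpcont).integrable_of_hasCompactSupport
        hpcs.mul_left).integrableOn
    have him : Integrable (fun y => g0 1 x y * hm y) (volume.restrict (Set.Ioi 0)) :=
      (((continuous_g0_one_right x).mul hmcont).integrable_of_hasCompactSupport
        hmcs.mul_left).integrableOn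
    have hsub : G0 1 h x = G0 1 hp x - G0 1 hm x := by
      have e : (fun y => g0 1 x y * h y)
          = fun y => g0 1 x y * hp y - g0 1 x y * hm y := by
        funext y; rw [← hpm y]; ring
      show (∫ y in Set.Ioi (0:ℝ), g0 1 x y * h y)
          = (∫ y in Set.Ioi (0:ℝ), g0 1 x y * hp y) - ∫ y in Set.Ioi (0:ℝ), g0 1 x y * hm y
      rw [e, integral_sub hip him]
    rw [← hres, hsub]
  calc ∫ x in Set.Ioi (0:ℝ), f x ∂μ
      = ∫ x in Set.Ioi (0:ℝ), (G0 1 hp x - G0 1 hm x) ∂μ :=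
        setIntegral_congr_fun measurableSet_Ioi (fun x hx => hpt x hx)
    _ = (∫ x in Set.Ioi (0:ℝ), G0 1 hp x ∂μ) - ∫ x in Set.Ioi (0:ℝ), G0 1 hm x ∂μ :=
        integral_sub (integrable_G0 hμ hp hpcont hpcs) (integrable_G0 hμ hm hmcont hmcs)
    _ = (∫ x in Set.Ioi (0:ℝ), G0 1 hp x ∂ν) - ∫ x in Set.Ioi (0:ℝ), G0 1 hm x ∂ν := by
        rw [h1, h2]
    _ = ∫ x in Set.Ioi (0:ℝ), (G0 1 hp x - G0 1 hm x) ∂ν :=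
        (integral_sub (integrable_G0 hν hp hpcont hpcs) (integrable_G0 hν hm hmcont hmcs)).symm
    _ = ∫ x in Set.Ioi (0:ℝ), f x ∂ν :=
        (setIntegral_congr_fun measurableSet_Ioi (fun x hx => hpt x hx)).symm

lemma meas_Icc_lt_top {μ : Measure ℝ}
    (hμ : (∫⁻ x in Set.Ioi (0 : ℝ), ENNReal.ofReal (min 1 x) ∂μ) < ⊤)
    {p q : ℝ} (hp : 0 < p) : μ (Set.Icc p q) < ⊤ := by
  have hsub : Set.Icc p q ⊆ Set.Ioi 0 := fun x hx => lt_of_lt_of_le hp hx.1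
  have hchain : ENNReal.ofReal (min 1 p) * μ (Set.Icc p q)
      ≤ ∫⁻ x in Set.Ioi (0:ℝ), ENNReal.ofReal (min 1 x) ∂μ := by
    calc ENNReal.ofReal (min 1 p) * μ (Set.Icc p q)
        = ∫⁻ _ in Set.Icc p q, ENNReal.ofReal (min 1 p) ∂μ := (setLIntegral_const _ _).symm
      _ ≤ ∫⁻ x in Set.Icc p q, ENNReal.ofReal (min 1 x) ∂μ := by
          apply setLIntegral_mono
          · exact ENNReal.measurable_ofReal.comp (measurable_const.min measurable_id)
          · intro x hx
            exact ENNReal.ofReal_le_ofReal (min_le_min le_rfl hx.1)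
      _ ≤ ∫⁻ x in Set.Ioi (0:ℝ), ENNReal.ofReal (min 1 x) ∂μ := lintegral_mono_set hsub
  have hpos : (0:ENNReal) < ENNReal.ofReal (min 1 p) :=
    ENNReal.ofReal_pos.mpr (lt_min one_pos hp)
  by_contra hcon
  push_neg at hcon
  rw [top_le_iff] at hcon
  rw [hcon, ENNReal.mul_top hpos.ne'] at hchain
  exact absurd (lt_of_le_of_lt hchain hμ) (lt_irrefl _)

lemma measure_Icc_le_of_heq (μ ν : Measure ℝ)
    (hμ : (∫⁻ x in Set.Ioi (0 : ℝ), ENNReal.ofReal (min 1 x) ∂μ) < ⊤)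
    (hν : (∫⁻ x in Set.Ioi (0 : ℝ), ENNReal.ofReal (min 1 x) ∂ν) < ⊤)
    (heq : ∀ h : ℝ → ℝ, MemC0 h → (∀ x, 0 ≤ h x) →
      ∫ x in Set.Ioi (0 : ℝ), G0 1 h x ∂μ = ∫ x in Set.Ioi (0 : ℝ), G0 1 h x ∂ν)
    {p q : ℝ} (hp : 0 < p) (hpq : p < q) :
    μ (Set.Icc p q) ≤ ν (Set.Icc p q) := by
  -- the sequence of outer radii
  have keyineq : ∀ n : ℕ, (μ (Set.Icc p q)).toReal
      ≤ (ν (Set.Icc (p - p/(n+2)) (q + p/(n+2)))).toReal := by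
    intro n
    set ε : ℝ := p/(n+2) with hε
    have hε0 : 0 < ε := by positivity
    have hεp : ε < p := by
      rw [hε, div_lt_iff₀ (by positivity)]
      nlinarith [hp]
    set φ : ContDiffBump ((p+q)/2) := ⟨(q-p)/2, (q-p)/2 + ε, by linarith, by linarith⟩ with hφ
    have hin : Metric.closedBall ((p+q)/2) φ.rIn = Set.Icc p q := by
      rw [Real.closedBall_eq_Icc]
      show Set.Icc ((p+q)/2 - (q-p)/2) ((p+q)/2 + (q-p)/2) = Set.Icc p q
      congr 1 <;> ring
    have hout : Metric.closedBall ((p+q)/2) φ.rOut = Set.Icc (p - ε) (q + ε) := by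
      rw [Real.closedBall_eq_Icc]
      show Set.Icc ((p+q)/2 - ((q-p)/2 + ε)) ((p+q)/2 + ((q-p)/2 + ε)) = Set.Icc (p-ε) (q+ε)
      congr 1 <;> ring
    have hφsupp : ∀ y, y ∉ Set.Icc (p - ε) (q + ε) → φ y = 0 := by
      intro y hy
      have : y ∉ tsupport φ := by rw [φ.tsupport_eq, hout]; exact hy
      exact image_eq_zero_of_notMem_tsupport this
    have h1 : ContDiff ℝ ((⊤:ℕ∞) : WithTop ℕ∞) φ := φ.contDiff
    have h2 := (contDiff_infty_iff_deriv.mp h1).2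
    have h3 := (contDiff_infty_iff_deriv.mp h2).2
    have hpε : 0 < p - ε := by linarith
    have hIeq := integral_f_eq μ ν hμ hν heq φ
      (h1.differentiable (by simp))
      (h2.differentiable (by simp)) h3.continuous hpε hφsupp
    -- integrability facts
    have hfinμ : (μ.restrict (Set.Ioi 0)) (Set.Icc (p-ε) (q+ε)) < ⊤ := by
      rw [Measure.restrict_eq_self μ (Set.Icc_subset_Ioi_iff (by linarith)|>.mpr hpε)]
      exact meas_Icc_lt_top hμ hpε
    have hfinν : (ν.restrict (Set.Ioi 0)) (Set.Icc (p-ε) (q+ε)) < ⊤ := by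
      rw [Measure.restrict_eq_self ν (Set.Icc_subset_Ioi_iff (by linarith)|>.mpr hpε)]
      exact meas_Icc_lt_top hν hpε
    have hindμ : Integrable ((Set.Icc (p-ε) (q+ε)).indicator (fun _ => (1:ℝ)))
        (μ.restrict (Set.Ioi 0)) := by
      rw [integrable_indicator_iff measurableSet_Icc]
      exact integrableOn_const hfinμ.ne
    have hindν : Integrable ((Set.Icc (p-ε) (q+ε)).indicator (fun _ => (1:ℝ)))
        (ν.restrict (Set.Ioi 0)) := by
      rw [integrable_indicator_iff measurableSet_Icc]
      exact integrableOn_const hfinν.ne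
    have hindμ' : Integrable ((Set.Icc p q).indicator (fun _ => (1:ℝ)))
        (μ.restrict (Set.Ioi 0)) := by
      rw [integrable_indicator_iff measurableSet_Icc]
      refine integrableOn_const (ne_of_lt ?_)
      rw [Measure.restrict_eq_self μ (Set.Icc_subset_Ioi_iff hpq.le|>.mpr hp)]
      exact meas_Icc_lt_top hμ hp
    have hφle : ∀ x, φ x ≤ (Set.Icc (p-ε) (q+ε)).indicator (fun _ => (1:ℝ)) x := by
      intro x
      by_cases hx : x ∈ Set.Icc (p-ε) (q+ε)
      · rw [Set.indicator_of_mem hx]; exact φ.le_one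
      · rw [Set.indicator_of_notMem hx, hφsupp x hx]
    have hφge : ∀ x, (Set.Icc p q).indicator (fun _ => (1:ℝ)) x ≤ φ x := by
      intro x
      by_cases hx : x ∈ Set.Icc p q
      · rw [Set.indicator_of_mem hx]
        exact le_of_eq (φ.one_of_mem_closedBall (by rw [hin]; exact hx)).symm
      · rw [Set.indicator_of_notMem hx]; exact φ.nonneg
    have hφcont : Continuous φ := h1.continuous
    have hφintμ : Integrable φ (μ.restrict (Set.Ioi 0)) := by
      apply hindμ.mono' hφcont.aestronglyMeasurable
      filter_upwards with x
      rw [Real.norm_eq_abs, abs_of_nonneg φ.nonneg]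
      exact hφle x
    have hφintν : Integrable φ (ν.restrict (Set.Ioi 0)) := by
      apply hindν.mono' hφcont.aestronglyMeasurable
      filter_upwards with x
      rw [Real.norm_eq_abs, abs_of_nonneg φ.nonneg]
      exact hφle x
    -- lower bound
    have hlow : (μ (Set.Icc p q)).toReal ≤ ∫ x in Set.Ioi (0:ℝ), φ x ∂μ := by
      have e1 : ∫ x in Set.Ioi (0:ℝ), (Set.Icc p q).indicator (fun _ => (1:ℝ)) x ∂μ
          = (μ (Set.Icc p q)).toReal := by
        rw [integral_indicator measurableSet_Icc]
        rw [Measure.restrict_restrict measurableSet_Icc]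
        rw [Set.inter_eq_self_of_subset_left (Set.Icc_subset_Ioi_iff hpq.le|>.mpr hp)]
        simp [setIntegral_const, measureReal_def]
      rw [← e1]
      exact integral_mono hindμ' hφintμ hφge
    -- upper bound
    have hup : ∫ x in Set.Ioi (0:ℝ), φ x ∂ν
        ≤ (ν (Set.Icc (p - ε) (q + ε))).toReal := by
      have e1 : ∫ x in Set.Ioi (0:ℝ), (Set.Icc (p-ε) (q+ε)).indicator (fun _ => (1:ℝ)) x ∂ν
          = (ν (Set.Icc (p-ε) (q+ε))).toReal := by
        rw [integral_indicator measurableSet_Icc]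
        rw [Measure.restrict_restrict measurableSet_Icc]
        rw [Set.inter_eq_self_of_subset_left (Set.Icc_subset_Ioi_iff (by linarith)|>.mpr hpε)]
        simp [setIntegral_const, measureReal_def]
      rw [← e1]
      exact integral_mono hφintν hindν hφle
    calc (μ (Set.Icc p q)).toReal ≤ ∫ x in Set.Ioi (0:ℝ), φ x ∂μ := hlow
      _ = ∫ x in Set.Ioi (0:ℝ), φ x ∂ν := hIeq
      _ ≤ (ν (Set.Icc (p - ε) (q + ε))).toReal := hup
  -- pass to the limit
  have hInter : (⋂ n : ℕ, Set.Icc (p - p/(n+2)) (q + p/(n+2))) = Set.Icc p q := by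
    ext x
    simp only [Set.mem_iInter, Set.mem_Icc]
    constructor
    · intro hx
      constructor
      · by_contra hcon
        push_neg at hcon
        obtain ⟨n, hn⟩ := exists_nat_gt (p / (p - x))
        have hpx : 0 < p - x := by linarith
        have h1 := (hx n).1
        have h2 : p / (p - x) < (n:ℝ) + 2 := by linarith [Nat.cast_nonneg (α := ℝ) n]
        rw [div_lt_iff₀ hpx] at h2
        have h3 : p / ((n:ℝ)+2) < p - x := by
          rw [div_lt_iff₀ (by positivity)]
          nlinarith
        linarith
      · by_contra hcon
        push_neg at hcon
        obtain ⟨n, hn⟩ := exists_nat_gt (p / (x - q))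
        have hpx : 0 < x - q := by linarith
        have h1 := (hx n).2
        have h2 : p / (x - q) < (n:ℝ) + 2 := by linarith [Nat.cast_nonneg (α := ℝ) n]
        rw [div_lt_iff₀ hpx] at h2
        have h3 : p / ((n:ℝ)+2) < x - q := by
          rw [div_lt_iff₀ (by positivity)]
          nlinarith
        linarith
    · intro hx n
      have hε0 : 0 < p/((n:ℝ)+2) := by positivity
      exact ⟨by linarith [hx.1], by linarith [hx.2]⟩
  have hanti : Antitone (fun n : ℕ => Set.Icc (p - p/(n+2)) (q + p/(n+2))) := by
    intro m n hmn
    have : p/((n:ℝ)+2) ≤ p/((m:ℝ)+2) := by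
      apply div_le_div_of_nonneg_left hp.le (by positivity)
      exact_mod_cast by omega
    exact Set.Icc_subset_Icc (by linarith) (by linarith)
  have htend : Filter.Tendsto (fun n : ℕ => ν (Set.Icc (p - p/(n+2)) (q + p/(n+2))))
      Filter.atTop (nhds (ν (Set.Icc p q))) := by
    have := MeasureTheory.tendsto_measure_iInter_atTop (μ := ν)
      (s := fun n : ℕ => Set.Icc (p - p/(n+2)) (q + p/(n+2)))
      (fun n => measurableSet_Icc.nullMeasurableSet) hanti
      ⟨0, by
        have h0 : (0:ℝ) < p - p/((0:ℕ)+2) := by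
          push_cast
          rw [sub_pos, div_lt_iff₀ (by norm_num)]
          nlinarith
        exact (meas_Icc_lt_top hν h0).ne⟩
    rw [hInter] at this
    exact this
  have hμfin : μ (Set.Icc p q) ≠ ⊤ := (meas_Icc_lt_top hμ hp).ne
  have hνfin : ν (Set.Icc p q) ≠ ⊤ := (meas_Icc_lt_top hν hp).ne
  rw [← ENNReal.toReal_le_toReal hμfin hνfin]
  have htendR : Filter.Tendsto
      (fun n : ℕ => (ν (Set.Icc (p - p/(n+2)) (q + p/(n+2)))).toReal)
      Filter.atTop (nhds ((ν (Set.Icc p q)).toReal)) :=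
    (ENNReal.tendsto_toReal hνfin).comp htend
  exact ge_of_tendsto' htendR keyineq

lemma measure_Ioc_eq_of_heq (μ ν : Measure ℝ)
    (hμ : (∫⁻ x in Set.Ioi (0 : ℝ), ENNReal.ofReal (min 1 x) ∂μ) < ⊤)
    (hν : (∫⁻ x in Set.Ioi (0 : ℝ), ENNReal.ofReal (min 1 x) ∂ν) < ⊤)
    (heq : ∀ h : ℝ → ℝ, MemC0 h → (∀ x, 0 ≤ h x) →
      ∫ x in Set.Ioi (0 : ℝ), G0 1 h x ∂μ = ∫ x in Set.Ioi (0 : ℝ), G0 1 h x ∂ν)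
    {p q : ℝ} (hp : 0 ≤ p) :
    μ (Set.Ioc p q) = ν (Set.Ioc p q) := by
  rcases le_or_gt q p with hqp | hpq
  · rw [Set.Ioc_eq_empty (by exact fun h => absurd hqp (not_le.mpr h))]
    simp
  · -- Icc equality for positives
    have hIcc : ∀ {u v : ℝ}, 0 < u → u < v → μ (Set.Icc u v) = ν (Set.Icc u v) := by
      intro u v hu huv
      exact le_antisymm (measure_Icc_le_of_heq μ ν hμ hν heq hu huv)
        (measure_Icc_le_of_heq ν μ hν hμ (fun h h1 h2 => (heq h h1 h2).symm) hu huv)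
    set d : ℝ := q - p with hd
    have hd0 : 0 < d := by rw [hd]; linarith
    have hUnion : (⋃ n : ℕ, Set.Icc (p + d/(n+2)) q) = Set.Ioc p q := by
      ext x
      simp only [Set.mem_iUnion, Set.mem_Icc, Set.mem_Ioc]
      constructor
      · rintro ⟨n, h1, h2⟩
        have : 0 < d/((n:ℝ)+2) := by positivity
        exact ⟨by linarith, h2⟩
      · rintro ⟨h1, h2⟩
        obtain ⟨n, hn⟩ := exists_nat_gt (d / (x - p))
        have hxp : 0 < x - p := by linarith
        refine ⟨n, ?_, h2⟩
        have h3 : d / (x - p) < (n:ℝ) + 2 := by linarith [Nat.cast_nonneg (α := ℝ) n]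
        rw [div_lt_iff₀ hxp] at h3
        have h4 : d / ((n:ℝ)+2) < x - p := by
          rw [div_lt_iff₀ (by positivity)]
          nlinarith
        linarith
    have hmono : Monotone (fun n : ℕ => Set.Icc (p + d/(n+2)) q) := by
      intro m n hmn
      have : d/((n:ℝ)+2) ≤ d/((m:ℝ)+2) := by
        apply div_le_div_of_nonneg_left hd0.le (by positivity)
        exact_mod_cast by omega
      exact Set.Icc_subset_Icc (by linarith) le_rfl
    have htμ := MeasureTheory.tendsto_measure_iUnion_atTop (μ := μ)
      (s := fun n : ℕ => Set.Icc (p + d/(n+2)) q) hmono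
    have htν := MeasureTheory.tendsto_measure_iUnion_atTop (μ := ν)
      (s := fun n : ℕ => Set.Icc (p + d/(n+2)) q) hmono
    rw [hUnion] at htμ htν
    have hfun : (fun n : ℕ => μ (Set.Icc (p + d/(n+2)) q))
        = fun n : ℕ => ν (Set.Icc (p + d/(n+2)) q) := by
      funext n
      have hu0 : 0 < p + d/((n:ℝ)+2) := by positivity
      have hlt : p + d/((n:ℝ)+2) < q := by
        have h1 : d/((n:ℝ)+2) < d := by
          rw [div_lt_iff₀ (by positivity)]
          nlinarith [Nat.cast_nonneg (α := ℝ) n]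
        linarith
      exact hIcc hu0 hlt
    have htμ' : Filter.Tendsto (fun n : ℕ => ν (Set.Icc (p + d/(n+2)) q))
        Filter.atTop (nhds (μ (Set.Ioc p q))) := by
      rw [← hfun]; exact htμ
    exact tendsto_nhds_unique htμ' htν

/-- If `μ, ν` are positive Borel measures on `(0,∞)` with
`∫ min(1,x) μ(dx) < ∞`, `∫ min(1,x) ν(dx) < ∞`, and
`∫ G⁰₁ h dμ = ∫ G⁰₁ h dν` for every nonnegative `h ∈ C₀([0,∞))`, then `μ = ν`. -/
theorem stmt11 (μ ν : Measure ℝ)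
    (hμ0 : μ (Set.Iic 0) = 0) (hν0 : ν (Set.Iic 0) = 0)
    (hμ : (∫⁻ x in Set.Ioi (0 : ℝ), ENNReal.ofReal (min 1 x) ∂μ) < ⊤)
    (hν : (∫⁻ x in Set.Ioi (0 : ℝ), ENNReal.ofReal (min 1 x) ∂ν) < ⊤)
    (heq : ∀ h : ℝ → ℝ, MemC0 h → (∀ x, 0 ≤ h x) →
      ∫ x in Set.Ioi (0 : ℝ), G0 1 h x ∂μ = ∫ x in Set.Ioi (0 : ℝ), G0 1 h x ∂ν) :
    μ = ν := by
  have hinter : ∀ (κ : Measure ℝ), κ (Set.Iic 0) = 0 → ∀ s : Set ℝ,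
      κ s = κ (s ∩ Set.Ioi 0) := by
    intro κ hκ0 s
    have h1 : κ (s ∩ Set.Iic 0) = 0 := measure_mono_null Set.inter_subset_right hκ0
    have hcover : s = (s ∩ Set.Ioi 0) ∪ (s ∩ Set.Iic 0) := by
      rw [← Set.inter_union_distrib_left, Set.union_comm, Set.Iic_union_Ioi, Set.inter_univ]
    apply le_antisymm
    · calc κ s = κ ((s ∩ Set.Ioi 0) ∪ (s ∩ Set.Iic 0)) := by rw [← hcover]
        _ ≤ κ (s ∩ Set.Ioi 0) + κ (s ∩ Set.Iic 0) := measure_union_le _ _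
        _ = κ (s ∩ Set.Ioi 0) := by rw [h1, add_zero]
    · exact measure_mono Set.inter_subset_left
  set I : ℕ → Set ℝ := fun n => Set.Ioc (1/((n:ℝ)+2)) ((n:ℝ)+2) with hI
  have hres : ∀ n : ℕ, μ.restrict (I n) = ν.restrict (I n) := by
    intro n
    have hen : (0:ℝ) < 1/((n:ℝ)+2) := by positivity
    apply Measure.ext_of_Ioc' (μ.restrict (I n)) (ν.restrict (I n))
    · intro a b _
      rw [Measure.restrict_apply measurableSet_Ioc]
      exact ne_of_lt (lt_of_le_of_lt (measure_mono Set.inter_subset_right)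
        (lt_of_le_of_lt (measure_mono Set.Ioc_subset_Icc_self) (meas_Icc_lt_top hμ hen)))
    · intro a b _
      rw [Measure.restrict_apply measurableSet_Ioc, Measure.restrict_apply measurableSet_Ioc,
        Set.Ioc_inter_Ioc]
      exact measure_Ioc_eq_of_heq μ ν hμ hν heq
        (le_of_lt (lt_of_lt_of_le hen (le_max_right a _)))
  have hcoverIoi : (⋃ n : ℕ, I n) = Set.Ioi (0:ℝ) := by
    ext x
    simp only [hI, Set.mem_iUnion, Set.mem_Ioc, Set.mem_Ioi]
    constructor
    · rintro ⟨n, h1, _⟩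
      have : (0:ℝ) < 1/((n:ℝ)+2) := by positivity
      linarith
    · intro hx
      obtain ⟨n, hn⟩ := exists_nat_gt (max (1/x) x)
      have h1 : 1/x < (n:ℝ) := lt_of_le_of_lt (le_max_left _ _) hn
      have h2 : x < (n:ℝ) := lt_of_le_of_lt (le_max_right _ _) hn
      refine ⟨n, ?_, by linarith⟩
      rw [div_lt_iff₀ (by positivity)] at h1 ⊢
      nlinarith
  have hmonoI : Monotone I := by
    intro m n hmn
    have h1 : (1:ℝ)/((n:ℝ)+2) ≤ 1/((m:ℝ)+2) := by
      apply div_le_div_of_nonneg_left zero_le_one (by positivity)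
      exact_mod_cast by omega
    have h2 : ((m:ℝ)+2) ≤ ((n:ℝ)+2) := by exact_mod_cast by omega
    exact Set.Ioc_subset_Ioc h1 h2
  ext s hs
  rw [hinter μ hμ0 s, hinter ν hν0 s]
  have hsm : Monotone (fun n => s ∩ I n) := fun m n h => Set.inter_subset_inter_right _ (hmonoI h)
  have htμ := MeasureTheory.tendsto_measure_iUnion_atTop (μ := μ) (s := fun n => s ∩ I n) hsm
  have htν := MeasureTheory.tendsto_measure_iUnion_atTop (μ := ν) (s := fun n => s ∩ I n) hsm
  have hucover : (⋃ n, s ∩ I n) = s ∩ Set.Ioi 0 := by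
    rw [← Set.inter_iUnion, hcoverIoi]
  rw [hucover] at htμ htν
  have htμ' : Filter.Tendsto (fun n => ν (s ∩ I n)) Filter.atTop
      (nhds (μ (s ∩ Set.Ioi 0))) := by
    apply htμ.congr
    intro n
    show μ (s ∩ I n) = ν (s ∩ I n)
    rw [← Measure.restrict_apply' measurableSet_Ioc,
      ← Measure.restrict_apply' measurableSet_Ioc, hres n]
  exact tendsto_nhds_unique htμ' htν
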